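/- The curvature of the planar curve α(u) = (u, τ r sin(u/r)) at parameter u, namely κ_α(u) = |τ/r · sin(u/r)| / (1 + τ² cos²(u/r))^{3/2}, is strictly less than the curvature of its image f₁∘α on the cylinder, for every u with sin(u/r) ≠ 0, where f₁(u,v) = (r sin(u/r), v, r cos(u/r)) and 0 < τ. -/

import Mathlib

open Real

noncomputable def e3 (x y z : ℝ) : EuclideanSpace ℝ (Fin 3) :=
  (WithLp.equiv 2 (Fin 3 → ℝ)).symm ![x, y, z]

/-- The cylinder parameterization `f(u,v) = (r sin(u/r), v, r cos(u/r))`. -/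
noncomputable def cyl (r u v : ℝ) : EuclideanSpace ℝ (Fin 3) :=
  e3 (r * Real.sin (u / r)) v (r * Real.cos (u / r))

/-- Cross product on `EuclideanSpace ℝ (Fin 3)`. -/
noncomputable def cross3 (x y : EuclideanSpace ℝ (Fin 3)) : EuclideanSpace ℝ (Fin 3) :=
  e3 (x 1 * y 2 - x 2 * y 1) (x 2 * y 0 - x 0 * y 2) (x 0 * y 1 - x 1 * y 0)

/-- Curvature of a space curve: `‖c′ × c″‖ / ‖c′‖³`. -/
noncomputable def curvature (c : ℝ → EuclideanSpace ℝ (Fin 3)) (t : ℝ) : ℝ :=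
  ‖cross3 (deriv c t) (deriv (deriv c) t)‖ / ‖deriv c t‖ ^ 3

lemma e3_apply0 (x y z : ℝ) : e3 x y z 0 = x := rfl
lemma e3_apply1 (x y z : ℝ) : e3 x y z 1 = y := rfl
lemma e3_apply2 (x y z : ℝ) : e3 x y z 2 = z := rfl

lemma cross3_e3 (a b c d e f : ℝ) :
    cross3 (e3 a b c) (e3 d e f) = e3 (b*f - c*e) (c*d - a*f) (a*e - b*d) := rfl

lemma norm_e3 (x y z : ℝ) : ‖e3 x y z‖ = Real.sqrt (x^2 + y^2 + z^2) := by
  rw [EuclideanSpace.norm_eq]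
  simp [Fin.sum_univ_three, e3_apply0, e3_apply1, e3_apply2, Real.norm_eq_abs, sq_abs]

lemma hasDerivAt_e3 {f g h : ℝ → ℝ} {f' g' h' : ℝ} {t : ℝ}
    (hf : HasDerivAt f f' t) (hg : HasDerivAt g g' t) (hh : HasDerivAt h h' t) :
    HasDerivAt (fun s => e3 (f s) (g s) (h s)) (e3 f' g' h') t := by
  have hp : HasDerivAt (fun s => ![f s, g s, h s]) ![f', g', h'] t := by
    rw [hasDerivAt_pi]
    intro i; fin_cases i
    · exact hf
    · exact hg
    · exact hh
  exact ((PiLp.continuousLinearEquiv 2 ℝ (fun _ : Fin 3 => ℝ)).symm :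
    (Fin 3 → ℝ) →L[ℝ] EuclideanSpace ℝ (Fin 3)).hasFDerivAt.comp_hasDerivAt t hp

lemma hasDerivAt_sin_div (r x : ℝ) (hr : r ≠ 0) :
    HasDerivAt (fun u' : ℝ => Real.sin (u' / r)) (Real.cos (x / r) / r) x := by
  have := (Real.hasDerivAt_sin (x / r)).comp x ((hasDerivAt_id x).div_const r)
  refine this.congr_deriv ?_; field_simp

lemma hasDerivAt_cos_div (r x : ℝ) (hr : r ≠ 0) :
    HasDerivAt (fun u' : ℝ => Real.cos (u' / r)) (-(Real.sin (x / r)) / r) x := by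
  have := (Real.hasDerivAt_cos (x / r)).comp x ((hasDerivAt_id x).div_const r)
  refine this.congr_deriv ?_; field_simp

lemma sqrt_cube {A : ℝ} (hA : 0 ≤ A) : Real.sqrt A ^ 3 = A ^ ((3:ℝ)/2) := by
  rw [Real.sqrt_eq_rpow, ← Real.rpow_natCast (A ^ ((1:ℝ)/2)) 3, ← Real.rpow_mul hA]
  norm_num

theorem stmt9 (r τ : ℝ) (hr : 0 < r) (hτ : 0 < τ) (u : ℝ) (hu : Real.sin (u / r) ≠ 0) :
    curvature (fun u' => e3 u' (τ * r * Real.sin (u' / r)) 0) u =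
      |τ / r * Real.sin (u / r)| / (1 + τ ^ 2 * Real.cos (u / r) ^ 2) ^ ((3 : ℝ) / 2) ∧
    |τ / r * Real.sin (u / r)| / (1 + τ ^ 2 * Real.cos (u / r) ^ 2) ^ ((3 : ℝ) / 2) <
      curvature (fun u' => cyl r u' (τ * r * Real.sin (u' / r))) u := by
  have hr' : r ≠ 0 := hr.ne'
  set s := Real.sin (u / r) with hs
  set co := Real.cos (u / r) with hco
  have hpy : s ^ 2 + co ^ 2 = 1 := Real.sin_sq_add_cos_sq (u / r)
  have hA : (0:ℝ) < 1 + τ ^ 2 * co ^ 2 := by positivity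
  -- first derivatives
  have hd1 : deriv (fun u' => e3 u' (τ * r * Real.sin (u' / r)) 0) =
      fun x => e3 1 (τ * Real.cos (x / r)) 0 := by
    funext x
    refine HasDerivAt.deriv (hasDerivAt_e3 (hasDerivAt_id x) ?_ (hasDerivAt_const x 0))
    have := (hasDerivAt_sin_div r x hr').const_mul (τ * r)
    refine this.congr_deriv ?_; field_simp
  have hd2 : deriv (fun x => e3 1 (τ * Real.cos (x / r)) 0) u =
      e3 0 (-(τ * s) / r) 0 := by
    refine HasDerivAt.deriv (hasDerivAt_e3 (hasDerivAt_const u 1) ?_ (hasDerivAt_const u 0))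
    have := (hasDerivAt_cos_div r u hr').const_mul τ
    refine this.congr_deriv ?_; rw [hs]; ring
  -- cylinder curve derivatives
  have hg1 : deriv (fun u' => cyl r u' (τ * r * Real.sin (u' / r))) =
      fun x => e3 (Real.cos (x / r)) (τ * Real.cos (x / r)) (-(Real.sin (x / r))) := by
    funext x
    refine HasDerivAt.deriv (hasDerivAt_e3 ?_ ?_ ?_)
    · have := (hasDerivAt_sin_div r x hr').const_mul r
      refine this.congr_deriv ?_; field_simp
    · have := (hasDerivAt_sin_div r x hr').const_mul (τ * r)
      refine this.congr_deriv ?_; field_simp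
    · have := (hasDerivAt_cos_div r x hr').const_mul r
      refine this.congr_deriv ?_; field_simp
  have hg2 : deriv (fun x => e3 (Real.cos (x / r)) (τ * Real.cos (x / r)) (-(Real.sin (x / r)))) u =
      e3 (-s / r) (-(τ * s) / r) (-co / r) := by
    refine HasDerivAt.deriv (hasDerivAt_e3 ?_ ?_ ?_)
    · have := hasDerivAt_cos_div r u hr'
      convert this using 1
    · have := (hasDerivAt_cos_div r u hr').const_mul τ
      refine this.congr_deriv ?_; rw [hs]; ring
    · have := (hasDerivAt_sin_div r u hr').neg
      refine this.congr_deriv ?_; rw [hco]; ring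
  constructor
  · rw [curvature, hd1, hd2, cross3_e3, norm_e3, norm_e3, sqrt_cube (by positivity)]
    simp only [← hs, ← hco]
    rw [show (1:ℝ)^2 + (τ * co)^2 + 0^2 = 1 + τ^2 * co^2 by ring]
    congr 1
    rw [show τ * co * 0 - 0 * (-(τ * s) / r) = 0 by ring,
        show (0:ℝ) * 0 - 1 * 0 = 0 by ring,
        show 1 * (-(τ * s) / r) - τ * co * 0 = -(τ / r * s) by ring]
    rw [show (0:ℝ)^2 + 0^2 + (-(τ / r * s))^2 = (τ / r * s)^2 by ring, Real.sqrt_sq_eq_abs]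
  · rw [curvature, hg1, hg2, cross3_e3, norm_e3, norm_e3, sqrt_cube (by positivity)]
    simp only [← hs, ← hco]
    rw [show co^2 + (τ * co)^2 + (-s)^2 = 1 + τ^2 * co^2 by
      rw [← hpy]; ring]
    gcongr
    rw [Real.lt_sqrt (abs_nonneg _), sq_abs]
    have hrinv : (0:ℝ) < r⁻¹ := by positivity
    have h1 : s^2 ≤ 1 := by nlinarith [sq_nonneg co]
    have key : τ * co * (-co / r) - -s * (-(τ * s) / r) = -(τ / r) ∧
        -s * (-s / r) - co * (-co / r) = 1 / r ∧
        co * (-(τ * s) / r) - τ * co * (-s / r) = 0 := by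
      refine ⟨?_, ?_, ?_⟩
      · field_simp
        linear_combination (-1) * hpy
      · field_simp
        linear_combination hpy
      · ring
    rw [key.1, key.2.1, key.2.2]
    have h2 : (τ / r * s)^2 ≤ τ^2 / r^2 := by
      rw [show τ / r * s = τ * s / r by ring, div_pow]
      gcongr ?_ / _
      nlinarith [sq_nonneg τ, h1]
    calc (τ / r * s)^2 ≤ τ^2/r^2 := h2
      _ < (-(τ/r))^2 + (1/r)^2 + 0^2 := by
          have h3 : (-(τ/r))^2 + (1/r)^2 + 0^2 = τ^2/r^2 + (1/r)^2 := by ring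
          have h4 : (0:ℝ) < (1/r)^2 := by positivity
          rw [h3]; linarith
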